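/- arXiv:2409.07750 — 2 statements merged into one kernel-verified Lean document; each statement's English description precedes it below -/
import Mathlib

section
/- Let X be a Banach space, T : X → X a Fredholm operator, and R : X → X a bounded operator such that (Id − TR)^n and (Id − RT)^n belong to S¹_app(X) for some integer n ≥ 1. Then Index T = tr((Id − RT)^n) − tr((Id − TR)^n). -/
noncomputable section

/-- A bounded operator on a Banach space is Fredholm if its kernel and cokernel
are finite-dimensional. -/
def IsFredholm {X : Type*} [NormedAddCommGroup X] [NormedSpace ℂ X] (T : X →L[ℂ] X) : Prop :=
  FiniteDimensional ℂ (LinearMap.ker (T : X →ₗ[ℂ] X)) ∧ FiniteDimensional ℂ (X ⧸ LinearMap.range (T : X →ₗ[ℂ] X))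

/-- The Fredholm index `dim ker T − dim (X / Ran T)`. -/
def fredholmIndex {X : Type*} [NormedAddCommGroup X] [NormedSpace ℂ X] (T : X →L[ℂ] X) : ℤ :=
  (Module.finrank ℂ (LinearMap.ker (T : X →ₗ[ℂ] X)) : ℤ) - (Module.finrank ℂ (X ⧸ LinearMap.range (T : X →ₗ[ℂ] X)) : ℤ)

/-- The `n`-th approximation number `a_{n+1}(T) = inf {‖T − R‖ : rank R ≤ n}`. -/
def approxNum {X : Type*} [NormedAddCommGroup X] [NormedSpace ℂ X]
    (T : X →L[ℂ] X) (n : ℕ) : ℝ :=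
  sInf {c : ℝ | ∃ R : X →L[ℂ] X, FiniteDimensional ℂ (LinearMap.range (R : X →ₗ[ℂ] X)) ∧
    Module.finrank ℂ (LinearMap.range (R : X →ₗ[ℂ] X)) ≤ n ∧ c = ‖T - R‖}

/-- The ideal `S¹_app(X)` of operators with summable approximation numbers. -/
def MemS1app {X : Type*} [NormedAddCommGroup X] [NormedSpace ℂ X] (T : X →L[ℂ] X) : Prop :=
  Summable fun n => approxNum T n


section Lemmas

variable {X : Type*} [NormedAddCommGroup X] [NormedSpace ℂ X]

lemma approxSet_nonempty (T : X →L[ℂ] X) (n : ℕ) :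
    Set.Nonempty {c : ℝ | ∃ R : X →L[ℂ] X, FiniteDimensional ℂ (LinearMap.range (R : X →ₗ[ℂ] X)) ∧
      Module.finrank ℂ (LinearMap.range (R : X →ₗ[ℂ] X)) ≤ n ∧ c = ‖T - R‖} := by
  have h0 : LinearMap.range ((0 : X →L[ℂ] X) : X →ₗ[ℂ] X) = ⊥ := by
    ext x; simp [LinearMap.mem_range, eq_comm]
  refine ⟨‖T‖, 0, ?_, ?_, by simp⟩
  · rw [h0]; infer_instance
  · rw [h0]; simp

lemma approxSet_bddBelow (T : X →L[ℂ] X) (n : ℕ) :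
    BddBelow {c : ℝ | ∃ R : X →L[ℂ] X, FiniteDimensional ℂ (LinearMap.range (R : X →ₗ[ℂ] X)) ∧
      Module.finrank ℂ (LinearMap.range (R : X →ₗ[ℂ] X)) ≤ n ∧ c = ‖T - R‖} := by
  refine ⟨0, ?_⟩
  rintro c ⟨R, -, -, rfl⟩
  exact norm_nonneg _

lemma approxNum_nonneg (T : X →L[ℂ] X) (n : ℕ) : 0 ≤ approxNum T n :=
  le_csInf (approxSet_nonempty T n) (by rintro c ⟨R, -, -, rfl⟩; exact norm_nonneg _)

lemma approxNum_le (T : X →L[ℂ] X) {n : ℕ} (R : X →L[ℂ] X)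
    (h1 : FiniteDimensional ℂ (LinearMap.range (R : X →ₗ[ℂ] X)))
    (h2 : Module.finrank ℂ (LinearMap.range (R : X →ₗ[ℂ] X)) ≤ n) :
    approxNum T n ≤ ‖T - R‖ :=
  csInf_le (approxSet_bddBelow T n) ⟨R, h1, h2, rfl⟩

lemma approxNum_eq_zero (A : X →L[ℂ] X) {n : ℕ}
    (h1 : FiniteDimensional ℂ (LinearMap.range (A : X →ₗ[ℂ] X)))
    (h2 : Module.finrank ℂ (LinearMap.range (A : X →ₗ[ℂ] X)) ≤ n) :
    approxNum A n = 0 :=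
  le_antisymm (by simpa using approxNum_le A A h1 h2) (approxNum_nonneg A n)

lemma memS1app_of_finiteRank (A : X →L[ℂ] X)
    (h : FiniteDimensional ℂ (LinearMap.range (A : X →ₗ[ℂ] X))) : MemS1app A := by
  apply summable_of_ne_finset_zero (s := Finset.range (Module.finrank ℂ (LinearMap.range (A : X →ₗ[ℂ] X))))
  intro n hn
  simp only [Finset.mem_range, not_lt] at hn
  exact approxNum_eq_zero A h hn

lemma approxNum_antitone (T : X →L[ℂ] X) {m n : ℕ} (h : m ≤ n) :
    approxNum T n ≤ approxNum T m := by
  apply csInf_le_csInf (approxSet_bddBelow T n) (approxSet_nonempty T m)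
  rintro c ⟨R, h1, h2, rfl⟩
  exact ⟨R, h1, h2.trans h, rfl⟩

lemma approxNum_mul_left_le (B A : X →L[ℂ] X) (n : ℕ) :
    approxNum (B * A) n ≤ ‖B‖ * approxNum A n := by
  have key : ∀ c ∈ {c : ℝ | ∃ R : X →L[ℂ] X, FiniteDimensional ℂ (LinearMap.range (R : X →ₗ[ℂ] X)) ∧
      Module.finrank ℂ (LinearMap.range (R : X →ₗ[ℂ] X)) ≤ n ∧ c = ‖A - R‖},
      approxNum (B * A) n ≤ ‖B‖ * c := by
    rintro c ⟨R, h1, h2, rfl⟩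
    have hle : LinearMap.range ((B * R : X →L[ℂ] X) : X →ₗ[ℂ] X) ≤
        Submodule.map (B : X →ₗ[ℂ] X) (LinearMap.range (R : X →ₗ[ℂ] X)) := by
      rintro x ⟨y, rfl⟩
      exact ⟨R y, ⟨y, rfl⟩, rfl⟩
    haveI : FiniteDimensional ℂ (Submodule.map (B : X →ₗ[ℂ] X) (LinearMap.range (R : X →ₗ[ℂ] X))) :=
      Module.Finite.map _ _
    have hfd : FiniteDimensional ℂ (LinearMap.range ((B * R : X →L[ℂ] X) : X →ₗ[ℂ] X)) :=
      Submodule.finiteDimensional_of_le hle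
    have hrk : Module.finrank ℂ (LinearMap.range ((B * R : X →L[ℂ] X) : X →ₗ[ℂ] X)) ≤ n :=
      ((Submodule.finrank_mono hle).trans
        (Submodule.finrank_map_le _ _)).trans h2
    calc approxNum (B * A) n ≤ ‖B * A - B * R‖ := approxNum_le _ _ hfd hrk
      _ = ‖B * (A - R)‖ := by rw [mul_sub]
      _ ≤ ‖B‖ * ‖A - R‖ := norm_mul_le _ _
  rcases ((norm_nonneg B).eq_or_lt.imp Eq.symm id) with hB | hB
  · obtain ⟨c, hc⟩ := approxSet_nonempty A n
    have := key c hc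
    rw [hB] at this ⊢
    simpa using this
  · rw [mul_comm, ← div_le_iff₀ hB]
    refine le_csInf (approxSet_nonempty A n) fun c hc => ?_
    rw [div_le_iff₀ hB, mul_comm]
    exact key c hc

lemma approxNum_mul_right_le (A B : X →L[ℂ] X) (n : ℕ) :
    approxNum (A * B) n ≤ ‖B‖ * approxNum A n := by
  have key : ∀ c ∈ {c : ℝ | ∃ R : X →L[ℂ] X, FiniteDimensional ℂ (LinearMap.range (R : X →ₗ[ℂ] X)) ∧
      Module.finrank ℂ (LinearMap.range (R : X →ₗ[ℂ] X)) ≤ n ∧ c = ‖A - R‖},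
      approxNum (A * B) n ≤ ‖B‖ * c := by
    rintro c ⟨R, h1, h2, rfl⟩
    have hle : LinearMap.range ((R * B : X →L[ℂ] X) : X →ₗ[ℂ] X) ≤ LinearMap.range (R : X →ₗ[ℂ] X) := by
      rintro x ⟨y, rfl⟩
      exact ⟨B y, rfl⟩
    haveI := h1
    have hfd : FiniteDimensional ℂ (LinearMap.range ((R * B : X →L[ℂ] X) : X →ₗ[ℂ] X)) :=
      Submodule.finiteDimensional_of_le hle
    have hrk : Module.finrank ℂ (LinearMap.range ((R * B : X →L[ℂ] X) : X →ₗ[ℂ] X)) ≤ n :=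
      (Submodule.finrank_mono hle).trans h2
    calc approxNum (A * B) n ≤ ‖A * B - R * B‖ := approxNum_le _ _ hfd hrk
      _ = ‖(A - R) * B‖ := by rw [sub_mul]
      _ ≤ ‖A - R‖ * ‖B‖ := norm_mul_le _ _
      _ = ‖B‖ * ‖A - R‖ := mul_comm _ _
  rcases ((norm_nonneg B).eq_or_lt.imp Eq.symm id) with hB | hB
  · obtain ⟨c, hc⟩ := approxSet_nonempty A n
    have := key c hc
    rw [hB] at this ⊢
    simpa using this
  · rw [mul_comm, ← div_le_iff₀ hB]
    refine le_csInf (approxSet_nonempty A n) fun c hc => ?_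
    rw [div_le_iff₀ hB, mul_comm]
    exact key c hc

lemma MemS1app.mul_left {A : X →L[ℂ] X} (B : X →L[ℂ] X) (hA : MemS1app A) :
    MemS1app (B * A) :=
  Summable.of_nonneg_of_le (fun n => approxNum_nonneg _ n)
    (fun n => approxNum_mul_left_le B A n) (Summable.mul_left ‖B‖ hA)

lemma MemS1app.mul_right {A : X →L[ℂ] X} (B : X →L[ℂ] X) (hA : MemS1app A) :
    MemS1app (A * B) :=
  Summable.of_nonneg_of_le (fun n => approxNum_nonneg _ n)
    (fun n => approxNum_mul_right_le A B n) (Summable.mul_left ‖B‖ hA)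

lemma approxNum_add_le (A B : X →L[ℂ] X) (m n : ℕ) :
    approxNum (A + B) (m + n) ≤ approxNum A m + approxNum B n := by
  have key : ∀ c ∈ {c : ℝ | ∃ R : X →L[ℂ] X, FiniteDimensional ℂ (LinearMap.range (R : X →ₗ[ℂ] X)) ∧
      Module.finrank ℂ (LinearMap.range (R : X →ₗ[ℂ] X)) ≤ m ∧ c = ‖A - R‖},
      ∀ d ∈ {c : ℝ | ∃ R : X →L[ℂ] X, FiniteDimensional ℂ (LinearMap.range (R : X →ₗ[ℂ] X)) ∧
      Module.finrank ℂ (LinearMap.range (R : X →ₗ[ℂ] X)) ≤ n ∧ c = ‖B - R‖},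
      approxNum (A + B) (m + n) ≤ c + d := by
    rintro c ⟨R₁, h1, h2, rfl⟩ d ⟨R₂, h3, h4, rfl⟩
    haveI := h1; haveI := h3
    have hle : LinearMap.range ((R₁ + R₂ : X →L[ℂ] X) : X →ₗ[ℂ] X) ≤ LinearMap.range (R₁ : X →ₗ[ℂ] X) ⊔ LinearMap.range (R₂ : X →ₗ[ℂ] X) := by
      rintro x ⟨y, rfl⟩
      exact Submodule.add_mem_sup ⟨y, rfl⟩ ⟨y, rfl⟩
    have hfd : FiniteDimensional ℂ (LinearMap.range ((R₁ + R₂ : X →L[ℂ] X) : X →ₗ[ℂ] X)) :=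
      Submodule.finiteDimensional_of_le hle
    have hrk : Module.finrank ℂ (LinearMap.range ((R₁ + R₂ : X →L[ℂ] X) : X →ₗ[ℂ] X)) ≤ m + n :=
      (Submodule.finrank_mono hle).trans
        ((Submodule.finrank_add_le_finrank_add_finrank _ _).trans (add_le_add h2 h4))
    calc approxNum (A + B) (m + n) ≤ ‖A + B - (R₁ + R₂)‖ := approxNum_le _ _ hfd hrk
      _ = ‖(A - R₁) + (B - R₂)‖ := by rw [add_sub_add_comm]
      _ ≤ ‖A - R₁‖ + ‖B - R₂‖ := norm_add_le _ _
  have h1 : ∀ c ∈ {c : ℝ | ∃ R : X →L[ℂ] X, FiniteDimensional ℂ (LinearMap.range (R : X →ₗ[ℂ] X)) ∧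
      Module.finrank ℂ (LinearMap.range (R : X →ₗ[ℂ] X)) ≤ m ∧ c = ‖A - R‖},
      approxNum (A + B) (m + n) - approxNum B n ≤ c := by
    intro c hc
    have : approxNum (A + B) (m + n) - c ≤ approxNum B n :=
      le_csInf (approxSet_nonempty B n) fun d hd => by linarith [key c hc d hd]
    linarith
  have := le_csInf (approxSet_nonempty A m) h1
  have h2 : approxNum (A + B) (m + n) - approxNum B n ≤ approxNum A m := this
  linarith

lemma MemS1app.add {A B : X →L[ℂ] X} (hA : MemS1app A) (hB : MemS1app B) :
    MemS1app (A + B) := by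
  have hs : Summable fun k => approxNum A k + approxNum B k := Summable.add hA hB
  apply Summable.even_add_odd
  · refine Summable.of_nonneg_of_le (fun k => approxNum_nonneg _ _) (fun k => ?_) hs
    calc approxNum (A + B) (2 * k) = approxNum (A + B) (k + k) := by ring_nf
      _ ≤ approxNum A k + approxNum B k := approxNum_add_le A B k k
  · refine Summable.of_nonneg_of_le (fun k => approxNum_nonneg _ _) (fun k => ?_) hs
    calc approxNum (A + B) (2 * k + 1) ≤ approxNum (A + B) (k + k) :=
          approxNum_antitone _ (by omega)
      _ ≤ approxNum A k + approxNum B k := approxNum_add_le A B k k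

lemma MemS1app.neg {A : X →L[ℂ] X} (hA : MemS1app A) : MemS1app (-A) := by
  rw [← neg_one_mul]
  exact hA.mul_left _

lemma MemS1app.sub {A B : X →L[ℂ] X} (hA : MemS1app A) (hB : MemS1app B) :
    MemS1app (A - B) := by
  rw [sub_eq_add_neg]
  exact hA.add hB.neg

end Lemmas


section Parametrix

variable {X : Type*} [NormedAddCommGroup X] [NormedSpace ℂ X] [CompleteSpace X]

lemma exists_parametrix (T : X →L[ℂ] X) (hT : IsFredholm T) :
    ∃ T₀ P Q : X →L[ℂ] X, T₀ * T = 1 - P ∧ T * T₀ = 1 - Q ∧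
      P * P = P ∧ Q * Q = Q ∧
      FiniteDimensional ℂ (LinearMap.range (P : X →ₗ[ℂ] X)) ∧ FiniteDimensional ℂ (LinearMap.range (Q : X →ₗ[ℂ] X)) ∧
      Module.finrank ℂ (LinearMap.range (P : X →ₗ[ℂ] X)) = Module.finrank ℂ (LinearMap.ker (T : X →ₗ[ℂ] X)) ∧
      Module.finrank ℂ (LinearMap.range (Q : X →ₗ[ℂ] X)) = Module.finrank ℂ (X ⧸ LinearMap.range (T : X →ₗ[ℂ] X)) := by
  haveI hker_fd : FiniteDimensional ℂ (LinearMap.ker (T : X →ₗ[ℂ] X)) := hT.1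
  haveI hcoker_fd : FiniteDimensional ℂ (X ⧸ LinearMap.range (T : X →ₗ[ℂ] X)) := hT.2
  haveI hker_cl : IsClosed (LinearMap.ker (T : X →ₗ[ℂ] X) : Set X) := ContinuousLinearMap.isClosed_ker T
  -- projection onto the kernel
  obtain ⟨π1, hπ1⟩ := Submodule.ClosedComplemented.of_finiteDimensional (LinearMap.ker (T : X →ₗ[ℂ] X))
  set P : X →L[ℂ] X := (LinearMap.ker (T : X →ₗ[ℂ] X)).subtypeL.comp π1 with hP_def
  have hPmem : ∀ x : X, P x ∈ LinearMap.ker (T : X →ₗ[ℂ] X) := fun x => (π1 x).2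
  have hPk : ∀ k : X, k ∈ LinearMap.ker (T : X →ₗ[ℂ] X) → P k = k := by
    intro k hk
    have := hπ1 ⟨k, hk⟩
    simp only [hP_def, ContinuousLinearMap.comp_apply, Submodule.subtypeL_apply]
    rw [show (⟨k, hk⟩ : LinearMap.ker (T : X →ₗ[ℂ] X)) = ((⟨k, hk⟩ : LinearMap.ker (T : X →ₗ[ℂ] X)) : X) from rfl] at this
    rw [this]
  have hTP : ∀ x : X, T (P x) = 0 := fun x => LinearMap.mem_ker.mp (hPmem x)
  -- complement of the range
  obtain ⟨F, hF⟩ := Submodule.exists_isCompl (LinearMap.range (T : X →ₗ[ℂ] X))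
  have equivF : (X ⧸ LinearMap.range (T : X →ₗ[ℂ] X)) ≃ₗ[ℂ] F :=
    Submodule.quotientEquivOfIsCompl _ _ hF
  haveI hF_fd : FiniteDimensional ℂ F := equivF.finiteDimensional
  -- the lifted map Tbar
  have hle1 : LinearMap.ker (T : X →ₗ[ℂ] X) ≤ LinearMap.ker (T : X →ₗ[ℂ] X) := le_of_eq (by rfl)
  set Tbar_l : (X ⧸ LinearMap.ker (T : X →ₗ[ℂ] X)) →ₗ[ℂ] X :=
    (LinearMap.ker (T : X →ₗ[ℂ] X)).liftQ (T : X →ₗ[ℂ] X) hle1 with hTbar_l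
  have hTbar_cont : Continuous Tbar_l := by
    have h1 : Continuous (Tbar_l ∘ (LinearMap.ker (T : X →ₗ[ℂ] X)).mkQ) := T.continuous
    exact ((Submodule.isOpenQuotientMap_mkQ _).isQuotientMap.continuous_iff).mpr h1
  set Tbar : (X ⧸ LinearMap.ker (T : X →ₗ[ℂ] X)) →L[ℂ] X := ⟨Tbar_l, hTbar_cont⟩ with hTbar_def
  have hTbar : ∀ x : X, Tbar (Submodule.Quotient.mk x) = T x := by
    intro x; simp [hTbar_def, hTbar_l]
  -- the lifted map ρ of 1 - P
  have hle2 : LinearMap.ker (T : X →ₗ[ℂ] X) ≤ LinearMap.ker ((1 - P : X →L[ℂ] X) : X →ₗ[ℂ] X) := by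
    intro k hk
    simp only [LinearMap.mem_ker, ContinuousLinearMap.coe_coe, ContinuousLinearMap.sub_apply,
      ContinuousLinearMap.one_apply]
    rw [hPk k hk, sub_self]
  set ρ_l : (X ⧸ LinearMap.ker (T : X →ₗ[ℂ] X)) →ₗ[ℂ] X :=
    (LinearMap.ker (T : X →ₗ[ℂ] X)).liftQ ((1 - P : X →L[ℂ] X) : X →ₗ[ℂ] X) hle2 with hρ_l
  have hρ_cont : Continuous ρ_l := by
    have h1 : Continuous (ρ_l ∘ (LinearMap.ker (T : X →ₗ[ℂ] X)).mkQ) := (1 - P : X →L[ℂ] X).continuous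
    exact ((Submodule.isOpenQuotientMap_mkQ _).isQuotientMap.continuous_iff).mpr h1
  set ρ : (X ⧸ LinearMap.ker (T : X →ₗ[ℂ] X)) →L[ℂ] X := ⟨ρ_l, hρ_cont⟩ with hρ_def
  have hρ : ∀ x : X, ρ (Submodule.Quotient.mk x) = x - P x := by
    intro x; simp [hρ_def, hρ_l]
  -- the equivalence
  set Φ : ((X ⧸ LinearMap.ker (T : X →ₗ[ℂ] X)) × F) →L[ℂ] X :=
    Tbar.comp (ContinuousLinearMap.fst ℂ _ _) + F.subtypeL.comp (ContinuousLinearMap.snd ℂ _ _)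
    with hΦ_def
  have hΦ : ∀ (q : X ⧸ LinearMap.ker (T : X →ₗ[ℂ] X)) (f : F), Φ (q, f) = Tbar q + (f : X) := by
    intro q f; simp [hΦ_def]
  have hker : LinearMap.ker (Φ : ((X ⧸ LinearMap.ker (T : X →ₗ[ℂ] X)) × F) →ₗ[ℂ] X) = ⊥ := by
    rw [Submodule.eq_bot_iff]
    rintro ⟨q, f⟩ hmem
    obtain ⟨x, rfl⟩ := Submodule.Quotient.mk_surjective _ q
    rw [LinearMap.mem_ker] at hmem
    rw [ContinuousLinearMap.coe_coe, hΦ, hTbar] at hmem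
    have hTx : T x = -(f : X) := by linear_combination (norm := module) hmem
    have hTx0 : T x = 0 := by
      refine Submodule.disjoint_def.mp hF.disjoint (T x) ⟨x, rfl⟩ ?_
      rw [hTx]; exact neg_mem f.2
    have hf0 : (f : X) = 0 := by rw [hTx0] at hTx; simpa using hTx.symm
    have hq0 : (Submodule.Quotient.mk x : X ⧸ LinearMap.ker (T : X →ₗ[ℂ] X)) = 0 :=
      (Submodule.Quotient.mk_eq_zero _).mpr (LinearMap.mem_ker.mpr hTx0)
    exact Prod.ext hq0 (by exact_mod_cast hf0)
  have hrange : LinearMap.range (Φ : ((X ⧸ LinearMap.ker (T : X →ₗ[ℂ] X)) × F) →ₗ[ℂ] X) = ⊤ := by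
    rw [LinearMap.range_eq_top]
    intro x
    have hx : x ∈ LinearMap.range (T : X →ₗ[ℂ] X) ⊔ F := by rw [hF.sup_eq_top]; trivial
    obtain ⟨t, ⟨y, rfl⟩, f, hf, rfl⟩ := Submodule.mem_sup.mp hx
    exact ⟨(Submodule.Quotient.mk y, ⟨f, hf⟩), by rw [ContinuousLinearMap.coe_coe, hΦ, hTbar]; rfl⟩
  set e := ContinuousLinearEquiv.ofBijective Φ hker hrange with he_def
  have he_apply : ∀ z, e z = Φ z := fun z => by rw [he_def]; rfl
  have hsymm : ∀ (z : (X ⧸ LinearMap.ker (T : X →ₗ[ℂ] X)) × F) (x : X), e z = x → e.symm x = z := by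
    intro z x h; rw [← h, ContinuousLinearEquiv.symm_apply_apply]
  have hsymmT : ∀ x : X, e.symm (T x) = (Submodule.Quotient.mk x, 0) := by
    intro x
    apply hsymm
    rw [he_apply, hΦ, hTbar]
    simp
  set esymmL : X →L[ℂ] ((X ⧸ LinearMap.ker (T : X →ₗ[ℂ] X)) × F) := e.symm.toContinuousLinearMap with hesymmL
  set T₀ : X →L[ℂ] X :=
    ρ.comp ((ContinuousLinearMap.fst ℂ _ _).comp esymmL) with hT₀_def
  set Q : X →L[ℂ] X :=
    F.subtypeL.comp ((ContinuousLinearMap.snd ℂ _ _).comp esymmL) with hQ_def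
  have hT₀_apply : ∀ x : X, T₀ x = ρ (e.symm x).1 := fun x => rfl
  have hQ_apply : ∀ x : X, Q x = ((e.symm x).2 : X) := fun x => rfl
  have hT0T : T₀ * T = 1 - P := by
    ext x
    rw [ContinuousLinearMap.mul_apply, hT₀_apply, hsymmT, hρ]
    simp
  have hTρ : ∀ q : X ⧸ LinearMap.ker (T : X →ₗ[ℂ] X), T (ρ q) = Tbar q := by
    intro q
    obtain ⟨x, rfl⟩ := Submodule.Quotient.mk_surjective _ q
    rw [hρ, hTbar, map_sub, hTP, sub_zero]
  have hTT0 : T * T₀ = 1 - Q := by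
    ext x
    rw [ContinuousLinearMap.mul_apply, hT₀_apply, hTρ]
    have hx : Tbar (e.symm x).1 + ((e.symm x).2 : X) = x := by
      rw [← hΦ (e.symm x).1 (e.symm x).2]
      show Φ (e.symm x) = x
      rw [← he_apply, ContinuousLinearEquiv.apply_symm_apply]
    simp only [ContinuousLinearMap.sub_apply, ContinuousLinearMap.one_apply, hQ_apply]
    linear_combination (norm := module) hx
  have hPP : P * P = P := by
    ext x
    rw [ContinuousLinearMap.mul_apply]
    exact hPk _ (hPmem x)
  have hsymmF : ∀ f : F, e.symm (f : X) = (0, f) := by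
    intro f
    apply hsymm
    rw [he_apply, hΦ]
    simp
  have hQQ : Q * Q = Q := by
    ext x
    rw [ContinuousLinearMap.mul_apply, hQ_apply, hQ_apply, hsymmF]
  have hrangeP : LinearMap.range (P : X →ₗ[ℂ] X) = LinearMap.ker (T : X →ₗ[ℂ] X) := by
    apply le_antisymm
    · rintro x ⟨y, rfl⟩; exact hPmem y
    · intro k hk; exact ⟨k, hPk k hk⟩
  have hrangeQ : LinearMap.range (Q : X →ₗ[ℂ] X) = F := by
    apply le_antisymm
    · rintro x ⟨y, rfl⟩
      rw [ContinuousLinearMap.coe_coe, hQ_apply]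
      exact ((e.symm y).2).2
    · intro f hf
      refine ⟨(f : X), ?_⟩
      rw [ContinuousLinearMap.coe_coe, hQ_apply, hsymmF ⟨f, hf⟩]
  have hfdP : FiniteDimensional ℂ (LinearMap.range (P : X →ₗ[ℂ] X)) := by rw [hrangeP]; exact hker_fd
  have hfdQ : FiniteDimensional ℂ (LinearMap.range (Q : X →ₗ[ℂ] X)) := by rw [hrangeQ]; exact hF_fd
  have hrkP : Module.finrank ℂ (LinearMap.range (P : X →ₗ[ℂ] X)) = Module.finrank ℂ (LinearMap.ker (T : X →ₗ[ℂ] X)) := by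
    rw [hrangeP]
  have hrkQ : Module.finrank ℂ (LinearMap.range (Q : X →ₗ[ℂ] X))
      = Module.finrank ℂ (X ⧸ LinearMap.range (T : X →ₗ[ℂ] X)) := by
    rw [hrangeQ]
    exact (LinearEquiv.finrank_eq equivF).symm
  exact ⟨T₀, P, Q, hT0T, hTT0, hPP, hQQ, hfdP, hfdQ, hrkP, hrkQ⟩

end Parametrix

/-- Higher power trace formula for the index: if `(Id − TR)^n` and `(Id − RT)^n`
lie in `S¹_app(X)` for some `n ≥ 1`, then
`Index T = tr((Id − RT)^n) − tr((Id − TR)^n)`. -/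
theorem fredholmIndex_eq_trace_pow_sub_trace_pow
    {X : Type*} [NormedAddCommGroup X] [NormedSpace ℂ X] [CompleteSpace X]
    (tr : (X →L[ℂ] X) → ℂ)
    (htr_add : ∀ A B : X →L[ℂ] X, MemS1app A → MemS1app B → tr (A + B) = tr A + tr B)
    (htr_smul : ∀ (c : ℂ) (A : X →L[ℂ] X), MemS1app A → tr (c • A) = c * tr A)
    (htr_rank : ∀ P : X →L[ℂ] X, P * P = P → FiniteDimensional ℂ (LinearMap.range (P : X →ₗ[ℂ] X)) →
      tr P = (Module.finrank ℂ (LinearMap.range (P : X →ₗ[ℂ] X)) : ℂ))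
    (htr_comm : ∀ A B : X →L[ℂ] X, MemS1app A → tr (A * B) = tr (B * A))
    (T R : X →L[ℂ] X) (hT : IsFredholm T) (n : ℕ) (hn : 1 ≤ n)
    (h1 : MemS1app ((1 - T * R) ^ n)) (h2 : MemS1app ((1 - R * T) ^ n)) :
    (fredholmIndex T : ℂ) = tr ((1 - R * T) ^ n) - tr ((1 - T * R) ^ n) := by
  obtain ⟨T₀, P, Q, hT0T, hTT0, hPP, hQQ, hfdP, hfdQ, hrkP, hrkQ⟩ := exists_parametrix T hT
  set K : X →L[ℂ] X := 1 - R * T with hK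
  set L : X →L[ℂ] X := 1 - T * R with hL
  have hTK : ∀ j : ℕ, T * K ^ j = L ^ j * T := by
    intro j; induction j with
    | zero => rw [pow_zero, pow_zero, one_mul, mul_one]
    | succ j ih =>
      have hbase : T * K = L * T := by rw [hK, hL, mul_sub, sub_mul, mul_one, one_mul, mul_assoc]
      rw [pow_succ, pow_succ, ← mul_assoc, ih, mul_assoc, hbase, ← mul_assoc]
  set S : X →L[ℂ] X := (∑ j ∈ Finset.range n, K ^ j) * R with hS
  have hgeom : (∑ j ∈ Finset.range n, K ^ j) * (1 - K) = 1 - K ^ n := by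
    rw [← neg_sub K 1, mul_neg, geom_sum_mul, neg_sub]
  have hgeomL : (∑ j ∈ Finset.range n, L ^ j) * (1 - L) = 1 - L ^ n := by
    rw [← neg_sub L 1, mul_neg, geom_sum_mul, neg_sub]
  have hST : S * T = 1 - K ^ n := by
    rw [hS, mul_assoc, show R * T = 1 - K from by rw [hK, sub_sub_cancel], hgeom]
  have hTS : T * S = 1 - L ^ n := by
    rw [hS, ← mul_assoc, Finset.mul_sum]
    rw [Finset.sum_congr rfl fun j _ => hTK j, ← Finset.sum_mul, mul_assoc,
      show T * R = 1 - L from by rw [hL, sub_sub_cancel], hgeomL]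
  have hmemP : MemS1app P := memS1app_of_finiteRank P hfdP
  have hmemQ : MemS1app Q := memS1app_of_finiteRank Q hfdQ
  have hD_eq : T₀ - S = T₀ * (L ^ n) - P * S := by
    have h4 : T₀ * (T * S) = S - P * S := by rw [← mul_assoc, hT0T, sub_mul, one_mul]
    have h5 : T₀ = T₀ * (T * S) + T₀ * (L ^ n) := by
      rw [← mul_add, hTS, sub_add_cancel, mul_one]
    conv_lhs => rw [h5, h4]
    abel
  have hmemD : MemS1app (T₀ * (L ^ n) - P * S) :=
    (h1.mul_left T₀).sub (hmemP.mul_right S)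
  set D : X →L[ℂ] X := T₀ * (L ^ n) - P * S with hD
  have hDT : D * T = K ^ n - P := by
    rw [show D = T₀ - S from hD_eq.symm, sub_mul, hT0T, hST]; abel
  have hTD : T * D = L ^ n - Q := by
    rw [show D = T₀ - S from hD_eq.symm, mul_sub, hTT0, hTS]; abel
  have expand : ∀ (C E : X →L[ℂ] X), MemS1app C → MemS1app E → tr (C - E) = tr C - tr E := by
    intro C E hC hE
    have hE' : MemS1app ((-1 : ℂ) • E) := by
      rw [neg_one_smul]; exact hE.neg
    rw [show C - E = C + (-1 : ℂ) • E from by rw [neg_one_smul, ← sub_eq_add_neg],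
      htr_add C _ hC hE', htr_smul (-1) E hE]
    ring
  have key : tr (K ^ n) - tr P = tr (L ^ n) - tr Q := by
    have := htr_comm D T hmemD
    rw [hDT, hTD, expand _ _ h2 hmemP, expand _ _ h1 hmemQ] at this
    exact this
  have htrP : tr P = (Module.finrank ℂ (LinearMap.ker (T : X →ₗ[ℂ] X)) : ℂ) := by
    rw [htr_rank P hPP hfdP, hrkP]
  have htrQ : tr Q = (Module.finrank ℂ (X ⧸ LinearMap.range (T : X →ₗ[ℂ] X)) : ℂ) := by
    rw [htr_rank Q hQQ hfdQ, hrkQ]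
  have : tr (K ^ n) - tr (L ^ n) = tr P - tr Q := by linear_combination key
  rw [this, htrP, htrQ, fredholmIndex]
  push_cast
  ring
end
end

section
/- Let A be a unital algebra acting on a Banach space X via a representation π with π(1) = Id_X, and let F : X → X be a bounded operator such that F² − Id is compact and [F, π(a)] is compact for every a ∈ A (an odd Banach Fredholm module). Set P := (Id + F)/2. Then for every invertible element u of A, the operator P π(u) P − (Id − P) : X → X is Fredholm. -/
noncomputable section

open Metric Set Filter

section Aux

variable {X : Type*} [NormedAddCommGroup X] [NormedSpace ℂ X]

lemma cpt_mulL (S : X →L[ℂ] X) {T : X →L[ℂ] X} (h : IsCompactOperator ⇑T) :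
    IsCompactOperator ⇑(S * T) :=
  h.continuous_comp S.continuous

lemma cpt_mulR {T : X →L[ℂ] X} (h : IsCompactOperator ⇑T) (S : X →L[ℂ] X) :
    IsCompactOperator ⇑(T * S) :=
  h.comp_clm S

lemma cpt_add {A B : X →L[ℂ] X} (hA : IsCompactOperator ⇑A) (hB : IsCompactOperator ⇑B) :
    IsCompactOperator ⇑(A + B) := by
  have := hA.add hB
  simpa [ContinuousLinearMap.coe_add'] using this

lemma cpt_smul (c : ℂ) {A : X →L[ℂ] X} (hA : IsCompactOperator ⇑A) :
    IsCompactOperator ⇑(c • A) := by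
  have := hA.smul c
  simpa [ContinuousLinearMap.coe_smul'] using this

end Aux

section Analytic

variable {X : Type*} [NormedAddCommGroup X] [NormedSpace ℂ X] [CompleteSpace X]

/-- Kernel of `L` is finite dimensional when `L - 1` is compact. -/
lemma fd_ker_of_cpt (L : X →L[ℂ] X) (hK : IsCompactOperator ⇑(L - 1)) :
    FiniteDimensional ℂ (LinearMap.ker (L : X →ₗ[ℂ] X)) := by
  set N := LinearMap.ker (L : X →ₗ[ℂ] X) with hN
  obtain ⟨C, hCc, hC⟩ := hK.image_closedBall_subset_compact 1
  have hNc : IsClosed (N : Set X) := ContinuousLinearMap.isClosed_ker L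
  have hsub : (N : Set X) ∩ closedBall (0 : X) 1 ⊆ -C := by
    rintro x ⟨hxN, hx1⟩
    have hLx : L x = 0 := hxN
    have hvx : (L - 1) x = -x := by
      simp [ContinuousLinearMap.sub_apply, hLx]
    have hxC : (L - 1) x ∈ C := hC ⟨x, hx1, rfl⟩
    rw [hvx] at hxC
    simpa using Set.neg_mem_neg.2 hxC
  have hcpt : IsCompact ((N : Set X) ∩ closedBall (0 : X) 1) :=
    (hCc.neg).of_isClosed_subset (hNc.inter isClosed_closedBall) hsub
  have himg : Subtype.val '' (closedBall (0 : N) 1) = (N : Set X) ∩ closedBall (0 : X) 1 := by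
    ext x
    constructor
    · rintro ⟨y, hy, rfl⟩
      exact ⟨y.2, by simpa [mem_closedBall, dist_eq_norm] using hy⟩
    · rintro ⟨hxN, hx⟩
      exact ⟨⟨x, hxN⟩, by simpa [mem_closedBall, dist_eq_norm] using hx, rfl⟩
  have hball : IsCompact (closedBall (0 : N) 1) := by
    rw [Topology.IsEmbedding.subtypeVal.isCompact_iff, himg]
    exact hcpt
  exact FiniteDimensional.of_isCompact_closedBall₀ (𝕜 := ℂ) one_pos hball

/-- `L` is bounded below modulo its kernel when `L - 1` is compact. -/
lemma bdd_below_of_cpt (L : X →L[ℂ] X) (hK : IsCompactOperator ⇑(L - 1)) :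
    ∃ c : ℝ, 0 < c ∧ ∀ x : X, c * infDist x (LinearMap.ker (L : X →ₗ[ℂ] X) : Set X) ≤ ‖L x‖ := by
  by_contra hcon
  push_neg at hcon
  set N := (LinearMap.ker (L : X →ₗ[ℂ] X) : Set X) with hNdef
  have hN0 : (0 : X) ∈ N := (LinearMap.ker (L : X →ₗ[ℂ] X)).zero_mem
  have hNne : N.Nonempty := ⟨0, hN0⟩
  obtain ⟨C, hCc, hC⟩ := hK.image_closedBall_subset_compact 1
  choose x hx using fun n : ℕ => hcon ((n + 1 : ℝ))⁻¹ (by positivity)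
  have hd : ∀ n, 0 < infDist (x n) N := by
    intro n
    by_contra hle
    push_neg at hle
    have h0 : infDist (x n) N = 0 := le_antisymm hle Metric.infDist_nonneg
    have hx' := hx n
    rw [h0, mul_zero] at hx'
    exact absurd hx' (not_lt.2 (norm_nonneg _))
  have hz : ∀ n, ∃ z ∈ N, dist (x n) z < 2 * infDist (x n) N := by
    intro n
    exact (Metric.infDist_lt_iff hNne).1 (by linarith [hd n])
  choose z hzN hzd using hz
  set w : ℕ → X := fun n => (‖x n - z n‖)⁻¹ • (x n - z n) with hw
  have hxz_pos : ∀ n, 0 < ‖x n - z n‖ := by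
    intro n
    have h1 : infDist (x n) N ≤ ‖x n - z n‖ := by
      simpa [dist_eq_norm] using Metric.infDist_le_dist_of_mem (hzN n)
    linarith [hd n]
  have hw1 : ∀ n, ‖w n‖ = 1 := by
    intro n
    simp [hw, norm_smul, inv_mul_cancel₀ (ne_of_gt (hxz_pos n))]
  have hwN : ∀ n, ∀ y ∈ N, (1 : ℝ) / 2 ≤ ‖w n - y‖ := by
    intro n y hy
    have hkey : w n - y = (‖x n - z n‖)⁻¹ • ((x n - z n) - ‖x n - z n‖ • y) := by
      rw [smul_sub, smul_smul, inv_mul_cancel₀ (ne_of_gt (hxz_pos n)), one_smul]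
    have hmem : z n + ‖x n - z n‖ • y ∈ N :=
      (LinearMap.ker (L : X →ₗ[ℂ] X)).add_mem (hzN n) ((LinearMap.ker (L : X →ₗ[ℂ] X)).smul_of_tower_mem _ hy)
    have hge : infDist (x n) N ≤ ‖(x n - z n) - ‖x n - z n‖ • y‖ := by
      have h2 := Metric.infDist_le_dist_of_mem (x := x n) hmem
      rw [dist_eq_norm] at h2
      rw [sub_sub]
      exact h2
    have h2 : ‖x n - z n‖ < 2 * infDist (x n) N := by
      simpa [dist_eq_norm] using hzd n
    rw [hkey, norm_smul, norm_inv, norm_norm]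
    calc (1 : ℝ) / 2 = (2 * infDist (x n) N)⁻¹ * infDist (x n) N := by
          rw [mul_inv, mul_assoc, inv_mul_cancel₀ (ne_of_gt (hd n)), mul_one, one_div]
      _ ≤ (‖x n - z n‖)⁻¹ * ‖(x n - z n) - ‖x n - z n‖ • y‖ := by
          apply mul_le_mul (inv_anti₀ (hxz_pos n) h2.le) hge Metric.infDist_nonneg
            (by positivity)
  have hLw : ∀ n, ‖L (w n)‖ ≤ (n + 1 : ℝ)⁻¹ := by
    intro n
    have hLz : L (z n) = 0 := hzN n
    have hLwn : L (w n) = (‖x n - z n‖)⁻¹ • L (x n) := by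
      simp [hw, map_smul, map_sub, hLz]
    rw [hLwn, norm_smul, norm_inv, norm_norm]
    have h1 : ‖L (x n)‖ < (n + 1 : ℝ)⁻¹ * infDist (x n) N := hx n
    have h2 : infDist (x n) N ≤ ‖x n - z n‖ := by
      simpa [dist_eq_norm] using Metric.infDist_le_dist_of_mem (hzN n)
    rw [inv_mul_le_iff₀ (hxz_pos n)]
    calc ‖L (x n)‖ ≤ (n + 1 : ℝ)⁻¹ * infDist (x n) N := le_of_lt h1
      _ ≤ (n + 1 : ℝ)⁻¹ * ‖x n - z n‖ := mul_le_mul_of_nonneg_left h2 (by positivity)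
      _ = ‖x n - z n‖ * (n + 1 : ℝ)⁻¹ := mul_comm _ _
  have hmemC : ∀ n, (L - 1) (w n) ∈ C := fun n =>
    hC ⟨w n, by simp [mem_closedBall, dist_eq_norm, hw1 n], rfl⟩
  obtain ⟨v, hvC, φ, hφ, hconv⟩ := hCc.tendsto_subseq hmemC
  have hLw0 : Tendsto (fun n => L (w (φ n))) atTop (nhds 0) := by
    rw [tendsto_zero_iff_norm_tendsto_zero]
    have hb : ∀ n, ‖L (w (φ n))‖ ≤ (n + 1 : ℝ)⁻¹ := by
      intro n
      refine (hLw (φ n)).trans ?_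
      have h' : (n : ℝ) ≤ (φ n : ℝ) := Nat.cast_le.2 hφ.le_apply
      apply inv_anti₀ (by positivity)
      linarith
    apply squeeze_zero (fun n => norm_nonneg _) hb
    simpa [one_div] using tendsto_one_div_add_atTop_nhds_zero_nat (𝕜 := ℝ)
  have hwconv : Tendsto (fun n => w (φ n)) atTop (nhds (-v)) := by
    have heq : (fun n => w (φ n)) = fun n => L (w (φ n)) - (L - 1) (w (φ n)) := by
      funext n
      simp [ContinuousLinearMap.sub_apply]
    rw [heq]
    simpa using hLw0.sub hconv
  have hvN : (-v) ∈ N := by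
    have h1 : Tendsto (fun n => L (w (φ n))) atTop (nhds (L (-v))) :=
      (L.continuous.tendsto _).comp hwconv
    have h0 : L (-v) = 0 := tendsto_nhds_unique h1 hLw0
    exact h0
  have habs : (1 : ℝ)/2 ≤ 0 := by
    have h2 : Tendsto (fun n => ‖w (φ n) - (-v)‖) atTop (nhds 0) := by
      simpa using (tendsto_iff_norm_sub_tendsto_zero.1 hwconv)
    exact ge_of_tendsto h2 (Filter.Eventually.of_forall fun n => hwN (φ n) _ hvN)
  linarith

/-- Range of `L` is closed when `L - 1` is compact. -/
lemma range_closed_of_cpt (L : X →L[ℂ] X) (hK : IsCompactOperator ⇑(L - 1)) :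
    IsClosed (LinearMap.range (L : X →ₗ[ℂ] X) : Set X) := by
  obtain ⟨c, hc, hbd⟩ := bdd_below_of_cpt L hK
  set N := (LinearMap.ker (L : X →ₗ[ℂ] X) : Set X) with hNdef
  have hNne : N.Nonempty := ⟨0, (LinearMap.ker (L : X →ₗ[ℂ] X)).zero_mem⟩
  apply IsSeqClosed.isClosed
  intro y p hyR hyp
  choose x hxL using hyR
  -- bound on norms of y
  obtain ⟨M, hM⟩ := (Metric.isBounded_range_of_tendsto y hyp).exists_norm_le
  set R : ℝ := c⁻¹ * M + 1 with hR
  have hM0 : 0 ≤ M := le_trans (norm_nonneg _) (hM _ ⟨0, rfl⟩)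
  have hcM : 0 ≤ c⁻¹ * M := by positivity
  have hRpos : 0 < R := by rw [hR]; linarith
  obtain ⟨C, hCc, hC⟩ := hK.image_closedBall_subset_compact R
  have hz : ∀ n, ∃ z ∈ N, dist (x n) z < infDist (x n) N + 1 := fun n =>
    (Metric.infDist_lt_iff hNne).1 (lt_add_one _)
  choose z hzN hzd using hz
  set x' : ℕ → X := fun n => x n - z n with hx'
  have hLx' : ∀ n, L (x' n) = y n := by
    intro n
    have hLz : L (z n) = 0 := hzN n
    simp [hx', map_sub, hLz, (id (hxL n) : L (x n) = y n)]
  have hx'bdd : ∀ n, ‖x' n‖ ≤ R := by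
    intro n
    have h1 : ‖x' n‖ < infDist (x n) N + 1 := by
      simpa [hx', dist_eq_norm] using hzd n
    have h2 : c * infDist (x n) N ≤ ‖L (x n)‖ := hbd (x n)
    have h3 : ‖L (x n)‖ ≤ M := by
      rw [(id (hxL n) : L (x n) = y n)]; exact hM _ ⟨n, rfl⟩
    have h4 : infDist (x n) N ≤ c⁻¹ * M := by
      have h5 : c * infDist (x n) N ≤ M := le_trans h2 h3
      calc infDist (x n) N = c⁻¹ * (c * infDist (x n) N) := by field_simp
        _ ≤ c⁻¹ * M := mul_le_mul_of_nonneg_left h5 (by positivity)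
    rw [hR]
    linarith
  have hmemC : ∀ n, (L - 1) (x' n) ∈ C := fun n =>
    hC ⟨x' n, by simpa [mem_closedBall, dist_eq_norm] using hx'bdd n, rfl⟩
  obtain ⟨v, hvC, φ, hφ, hconv⟩ := hCc.tendsto_subseq hmemC
  have hx'conv : Tendsto (fun n => x' (φ n)) atTop (nhds (p - v)) := by
    have heq : (fun n => x' (φ n)) = fun n => y (φ n) - (L - 1) (x' (φ n)) := by
      funext n
      simp [← hLx' (φ n), ContinuousLinearMap.sub_apply]
    rw [heq]
    exact (hyp.comp hφ.tendsto_atTop).sub hconv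
  have : L (p - v) = p := by
    have h1 : Tendsto (fun n => L (x' (φ n))) atTop (nhds (L (p - v))) :=
      (L.continuous.tendsto _).comp hx'conv
    have h2 : Tendsto (fun n => L (x' (φ n))) atTop (nhds p) := by
      have : (fun n => L (x' (φ n))) = fun n => y (φ n) := by
        funext n; exact hLx' (φ n)
      rw [this]
      exact hyp.comp hφ.tendsto_atTop
    exact tendsto_nhds_unique h1 h2
  exact ⟨p - v, this⟩

/-- Cokernel of `L` is finite dimensional when `L - 1` is compact. -/
lemma fd_coker_of_cpt (L : X →L[ℂ] X) (hK : IsCompactOperator ⇑(L - 1)) :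
    FiniteDimensional ℂ (X ⧸ LinearMap.range (L : X →ₗ[ℂ] X)) := by
  set R := LinearMap.range (L : X →ₗ[ℂ] X) with hRdef
  haveI hRc : IsClosed (R : Set X) := range_closed_of_cpt L hK
  -- the quotient map as a continuous linear map
  set q : X →L[ℂ] X ⧸ R := LinearMap.mkContinuous R.mkQ 1
    (fun x => by simpa using Submodule.Quotient.norm_mk_le R x) with hq
  have hqx : ∀ x : X, q x = Submodule.Quotient.mk x := fun x => rfl
  -- q = - q ∘ (L - 1), hence compact
  have hker : ∀ x : X, q (L x) = 0 := by
    intro x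
    rw [hqx]
    exact (Submodule.Quotient.mk_eq_zero R).2 ⟨x, rfl⟩
  have hqc : IsCompactOperator ⇑q := by
    have heq : ⇑q = -(⇑q ∘ ⇑(L - 1)) := by
      funext x
      have h1 : q x + q ((L - 1) x) = 0 := by
        rw [← map_add]
        have hxx : x + (L - 1) x = L x := by
          rw [ContinuousLinearMap.sub_apply, ContinuousLinearMap.one_apply]
          abel
        rw [hxx]
        exact hker x
      have h2 : q x = -(q ((L - 1) x)) := eq_neg_of_add_eq_zero_left h1
      simpa [Function.comp] using h2
    rw [heq]
    exact (hK.continuous_comp q.continuous).neg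
  have hqsurj : Function.Surjective ⇑q := by
    intro ξ
    obtain ⟨x, hx⟩ := Submodule.Quotient.mk_surjective R ξ
    exact ⟨x, by rw [hqx, hx]⟩
  have hopen : IsOpenMap ⇑q := q.isOpenMap hqsurj
  -- an open neighbourhood of 0 inside a compact set
  obtain ⟨C, hCc, hC⟩ := hqc.image_closedBall_subset_compact 1
  have h0mem : (0 : X ⧸ R) ∈ ⇑q '' ball (0 : X) 1 :=
    ⟨0, by simp [mem_ball], by simp⟩
  obtain ⟨ε, hε, hball⟩ := Metric.isOpen_iff.1 (hopen _ isOpen_ball) 0 h0mem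
  have hsub : closedBall (0 : X ⧸ R) (ε/2) ⊆ C := by
    intro ξ hξ
    have h1 : ξ ∈ ball (0 : X ⧸ R) ε := by
      rw [mem_closedBall] at hξ
      rw [mem_ball]
      linarith [half_lt_self hε]
    have h2 := hball h1
    exact hC (Set.image_mono ball_subset_closedBall h2)
  have hcpt : IsCompact (closedBall (0 : X ⧸ R) (ε/2)) :=
    hCc.of_isClosed_subset isClosed_closedBall hsub
  exact FiniteDimensional.of_isCompact_closedBall₀ (𝕜 := ℂ) (half_pos hε) hcpt

end Analytic

section Atkinson

variable {X : Type*} [NormedAddCommGroup X] [NormedSpace ℂ X] [CompleteSpace X]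

lemma atkinson {T S : X →L[ℂ] X}
    (h1 : IsCompactOperator ⇑(S * T - 1)) (h2 : IsCompactOperator ⇑(T * S - 1)) :
    FiniteDimensional ℂ (LinearMap.ker (T : X →ₗ[ℂ] X)) ∧ FiniteDimensional ℂ (X ⧸ LinearMap.range (T : X →ₗ[ℂ] X)) := by
  constructor
  · haveI := fd_ker_of_cpt (S * T) h1
    refine Submodule.finiteDimensional_of_le (S₂ := LinearMap.ker ((S * T : X →L[ℂ] X) : X →ₗ[ℂ] X)) ?_
    intro x hx
    have hTx : T x = 0 := hx
    show (S * T) x = 0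
    simp [ContinuousLinearMap.mul_apply, hTx]
  · haveI := fd_coker_of_cpt (T * S) h2
    have hle : LinearMap.range ((T * S : X →L[ℂ] X) : X →ₗ[ℂ] X) ≤
        (LinearMap.range (T : X →ₗ[ℂ] X)).comap (LinearMap.id : X →ₗ[ℂ] X) := by
      rintro y ⟨x, rfl⟩
      exact ⟨S x, rfl⟩
    let f : (X ⧸ LinearMap.range ((T * S : X →L[ℂ] X) : X →ₗ[ℂ] X)) →ₗ[ℂ] (X ⧸ LinearMap.range (T : X →ₗ[ℂ] X)) :=
      Submodule.mapQ _ _ LinearMap.id hle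
    have hfs : Function.Surjective f := by
      intro ξ
      obtain ⟨x, rfl⟩ := Submodule.Quotient.mk_surjective _ ξ
      exact ⟨Submodule.Quotient.mk x, rfl⟩
    exact Module.Finite.of_surjective f hfs

end Atkinson

section Algebra

variable {X : Type*} [NormedAddCommGroup X] [NormedSpace ℂ X]

lemma key_cpt (P a b : X →L[ℂ] X)
    (hE : IsCompactOperator ⇑(P * P - P))
    (hCb : IsCompactOperator ⇑(P * b - b * P))
    (hab : a * b = 1) :
    IsCompactOperator ⇑((P * a * P - (1 - P)) * (P * b * P - (1 - P)) - 1) := by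
  have hid : (P * a * P - (1 - P)) * (P * b * P - (1 - P)) - 1 =
      (P * (a * b) * (P * P) - P * (P * P))
      + ((P * a) * ((P * b - b * P) * P)
      + ((P * a) * ((P * P - P) * (b * P))
      + ((P * a) * (P * P - P)
      + ((P * P - P) * (b * P)
      + ((P * P - P)
      + ((P * P - P)
      + (P * P - P) * P)))))) := by
    noncomm_ring
  rw [hid, hab, mul_one, sub_self, zero_add]
  exact cpt_add (cpt_mulL _ (cpt_mulR hCb P))
    (cpt_add (cpt_mulL _ (cpt_mulR hE (b * P)))
      (cpt_add (cpt_mulL _ hE)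
        (cpt_add (cpt_mulR hE (b * P))
          (cpt_add hE (cpt_add hE (cpt_mulR hE P))))))

end Algebra


/-- Odd coupling: for an odd Banach Fredholm module `(X, F)` over a unital algebra `A`
(so `F² − Id` and all commutators `[F, π(a)]` are compact) with `P = (Id + F)/2`,
and `u ∈ A` invertible, the operator `P π(u) P − (Id − P)` is Fredholm. -/
theorem isFredholm_PuP_sub
    {A : Type*} [Ring A] {X : Type*} [NormedAddCommGroup X] [NormedSpace ℂ X] [CompleteSpace X]
    (π : A →+* (X →L[ℂ] X)) (F : X →L[ℂ] X)
    (hF : IsCompactOperator ⇑(F * F - 1))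
    (hcomm : ∀ a : A, IsCompactOperator ⇑(F * π a - π a * F))
    (u : A) (hu : IsUnit u)
    (P : X →L[ℂ] X) (hP : P = (2⁻¹ : ℂ) • (1 + F)) :
    IsFredholm (P * π u * P - (1 - P)) := by
  obtain ⟨v, hv1, hv2⟩ : ∃ v : A, u * v = 1 ∧ v * u = 1 :=
    ⟨↑hu.unit⁻¹, hu.mul_val_inv, hu.val_inv_mul⟩
  have hab : π u * π v = 1 := by rw [← map_mul, hv1, map_one]
  have hba : π v * π u = 1 := by rw [← map_mul, hv2, map_one]
  have hE : IsCompactOperator ⇑(P * P - P) := by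
    have hPP : P * P - P = (4⁻¹ : ℂ) • (F * F - 1) := by
      rw [hP]
      ext x
      simp only [ContinuousLinearMap.mul_apply, ContinuousLinearMap.smul_apply,
        ContinuousLinearMap.sub_apply, ContinuousLinearMap.add_apply,
        ContinuousLinearMap.one_apply, map_add, map_smul]
      module
    rw [hPP]
    exact cpt_smul _ hF
  have hC : ∀ a : A, IsCompactOperator ⇑(P * π a - π a * P) := by
    intro a
    have hCa : P * π a - π a * P = (2⁻¹ : ℂ) • (F * π a - π a * F) := by
      rw [hP]
      ext x
      simp only [ContinuousLinearMap.mul_apply, ContinuousLinearMap.smul_apply,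
        ContinuousLinearMap.sub_apply, ContinuousLinearMap.add_apply,
        ContinuousLinearMap.one_apply, map_add, map_smul]
      module
    rw [hCa]
    exact cpt_smul _ (hcomm a)
  have h2 : IsCompactOperator
      ⇑((P * π u * P - (1 - P)) * (P * π v * P - (1 - P)) - 1) :=
    key_cpt P (π u) (π v) hE (hC v) hab
  have h1 : IsCompactOperator
      ⇑((P * π v * P - (1 - P)) * (P * π u * P - (1 - P)) - 1) :=
    key_cpt P (π v) (π u) hE (hC u) hba
  exact atkinson h1 h2
end
end
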